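/- arXiv:1910.05661 — 2 statements merged into one kernel-verified Lean document; each statement's English description precedes it below -/
import Mathlib

section
/- Let (Y_i)_{0≤i<n} and (Z_i)_{0≤i<n} be sequences of n complex numbers, each of whose terms lies in {1, ω, ω²}. Then |Σ_{i=0}^{n−1} (Y_i − Z_i)|² is an integer, and it is congruent to 0 modulo 9 if ∏_{i=0}^{n−1} Y_i = ∏_{i=0}^{n−1} Z_i, and congruent to 3 modulo 9 otherwise. -/
open scoped BigOperators

/-- `ω = e^{2πi/3}`, a primitive cube root of unity. -/
noncomputable def ω : ℂ := Complex.exp (2 * Real.pi * Complex.I / 3)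

lemma omega_prim : IsPrimitiveRoot ω 3 := by
  have := Complex.isPrimitiveRoot_exp 3 (by norm_num)
  simpa [ω] using this

lemma omega_pow3 : ω ^ 3 = 1 := omega_prim.pow_eq_one

lemma omega_sum : 1 + ω + ω ^ 2 = 0 := by
  have hne : ω ≠ 1 := omega_prim.ne_one (by norm_num)
  have h : (ω - 1) * (1 + ω + ω ^ 2) = 0 := by ring_nf; linear_combination omega_pow3
  rcases mul_eq_zero.mp h with h | h
  · exact absurd (sub_eq_zero.mp h) hne
  · exact h

lemma conj_omega : (starRingEnd ℂ) ω = ω ^ 2 := by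
  have h1 : ω * (starRingEnd ℂ) ω = 1 := by
    unfold ω
    rw [← Complex.exp_conj, ← Complex.exp_add]
    rw [show (starRingEnd ℂ) (2 * ↑Real.pi * Complex.I / 3) = -(2 * ↑Real.pi * Complex.I / 3) by
      simp [map_div₀, Complex.conj_I, map_ofNat]; ring]
    simp
  have h2 : ω * ω ^ 2 = 1 := by linear_combination omega_pow3
  have hne : ω ≠ 0 := by intro h; rw [h] at h2; simp at h2
  exact mul_left_cancel₀ hne (h1.trans h2.symm)

/-- coordinates of ω^a in basis (1, ω) -/
def Fc : ℕ → ℤ := fun a => if a = 0 then 1 else if a = 1 then 0 else -1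
def Gc : ℕ → ℤ := fun a => if a = 0 then 0 else if a = 1 then 1 else -1

lemma pow_eq_coords {a : ℕ} (ha : a < 3) : ω ^ a = ((Fc a : ℤ) : ℂ) + ((Gc a : ℤ) : ℂ) * ω := by
  interval_cases a <;> simp [Fc, Gc]
  · linear_combination omega_sum

lemma coord_dvd1 {a : ℕ} (ha : a < 3) : (3 : ℤ) ∣ (Fc a + Gc a - 1) := by
  interval_cases a <;> decide

lemma coord_dvd2 {a : ℕ} (ha : a < 3) : (3 : ℤ) ∣ (Fc a - Gc a - (a : ℤ) - 1) := by
  interval_cases a <;> decide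

lemma final_arith (P Q D : ℤ) (h1 : 3 ∣ P + Q) (h2 : 3 ∣ P - Q - D) :
    ((3 ∣ D) → (P ^ 2 - P * Q + Q ^ 2) % 9 = 0) ∧
    (¬ (3 ∣ D) → (P ^ 2 - P * Q + Q ^ 2) % 9 = 3) := by
  obtain ⟨m, hm⟩ := h1
  have hP : P = 3 * m - Q := by omega
  constructor
  · intro hD
    have hQ3 : (3 : ℤ) ∣ Q := by omega
    obtain ⟨q, hq⟩ := hQ3
    have hk : P ^ 2 - P * Q + Q ^ 2 = 9 * (m ^ 2 - m * Q + 3 * q ^ 2) := by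
      rw [hP, hq]; ring
    omega
  · intro hD
    have hQD : ¬ (3 : ℤ) ∣ Q := by omega
    set q := Q / 3 with hq
    set r := Q % 3 with hr
    have hQ : Q = 3 * q + r := by omega
    have hrcase : r = 1 ∨ r = 2 := by omega
    rcases hrcase with h | h
    · have hk : P ^ 2 - P * Q + Q ^ 2 = 9 * (m ^ 2 - m * Q + 3 * q ^ 2 + 2 * q) + 3 := by
        rw [hP, hQ, h]; ring
      omega
    · have hk : P ^ 2 - P * Q + Q ^ 2 = 9 * (m ^ 2 - m * Q + 3 * q ^ 2 + 4 * q + 1) + 3 := by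
        rw [hP, hQ, h]; ring
      omega

/-- If `(Y_i)` and `(Z_i)` are length-`n` sequences of cube roots of unity, then
`|Σ (Y_i − Z_i)|²` is an integer, congruent to `0` mod `9` if `∏ Y_i = ∏ Z_i`
and congruent to `3` mod `9` otherwise. -/
theorem abs_sq_diff_of_cube_roots (n : ℕ) (Y Z : ℕ → ℂ)
    (hY : ∀ i < n, Y i ∈ ({1, ω, ω ^ 2} : Set ℂ))
    (hZ : ∀ i < n, Z i ∈ ({1, ω, ω ^ 2} : Set ℂ)) :
    ∃ k : ℤ,
      (‖∑ i ∈ Finset.range n, (Y i - Z i)‖) ^ 2 = (k : ℝ) ∧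
      ((∏ i ∈ Finset.range n, Y i) = (∏ i ∈ Finset.range n, Z i) → k % 9 = 0) ∧
      ((∏ i ∈ Finset.range n, Y i) ≠ (∏ i ∈ Finset.range n, Z i) → k % 9 = 3) := by
  classical
  set A : ℕ → ℕ := fun i => if Y i = 1 then 0 else if Y i = ω then 1 else 2 with hAdef
  set B : ℕ → ℕ := fun i => if Z i = 1 then 0 else if Z i = ω then 1 else 2 with hBdef
  have hA3 : ∀ i, A i < 3 := by intro i; simp only [hAdef]; split_ifs <;> norm_num
  have hB3 : ∀ i, B i < 3 := by intro i; simp only [hBdef]; split_ifs <;> norm_num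
  have hAY : ∀ i < n, Y i = ω ^ A i := by
    intro i hi
    have h := hY i hi
    simp only [Set.mem_insert_iff, Set.mem_singleton_iff] at h
    simp only [hAdef]
    by_cases h1 : Y i = 1
    · rw [if_pos h1, pow_zero, h1]
    by_cases h2 : Y i = ω
    · rw [if_neg h1, if_pos h2, pow_one, h2]
    · have h3 : Y i = ω ^ 2 := by tauto
      rw [if_neg h1, if_neg h2, h3]
  have hBZ : ∀ i < n, Z i = ω ^ B i := by
    intro i hi
    have h := hZ i hi
    simp only [Set.mem_insert_iff, Set.mem_singleton_iff] at h
    simp only [hBdef]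
    by_cases h1 : Z i = 1
    · rw [if_pos h1, pow_zero, h1]
    by_cases h2 : Z i = ω
    · rw [if_neg h1, if_pos h2, pow_one, h2]
    · have h3 : Z i = ω ^ 2 := by tauto
      rw [if_neg h1, if_neg h2, h3]
  set P : ℤ := ∑ i ∈ Finset.range n, (Fc (A i) - Fc (B i)) with hPdef
  set Q : ℤ := ∑ i ∈ Finset.range n, (Gc (A i) - Gc (B i)) with hQdef
  set D : ℤ := ∑ i ∈ Finset.range n, ((A i : ℤ) - (B i : ℤ)) with hDdef
  -- the sum in coordinates
  have hS : (∑ i ∈ Finset.range n, (Y i - Z i)) = (P : ℂ) + (Q : ℂ) * ω := by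
    have : ∀ i ∈ Finset.range n,
        Y i - Z i = ((Fc (A i) - Fc (B i) : ℤ) : ℂ) + ((Gc (A i) - Gc (B i) : ℤ) : ℂ) * ω := by
      intro i hi
      rw [Finset.mem_range] at hi
      rw [hAY i hi, hBZ i hi, pow_eq_coords (hA3 i), pow_eq_coords (hB3 i)]
      push_cast; ring
    rw [Finset.sum_congr rfl this, Finset.sum_add_distrib, ← Finset.sum_mul]
    push_cast [hPdef, hQdef]
    ring
  refine ⟨P ^ 2 - P * Q + Q ^ 2, ?_, ?_⟩
  · -- |S|² = P² - PQ + Q²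
    rw [hS, Complex.sq_norm]
    have hc : (starRingEnd ℂ) ((P : ℂ) + (Q : ℂ) * ω) = (P : ℂ) + (Q : ℂ) * ω ^ 2 := by
      simp [map_add, map_mul, conj_omega]
    have hmc := Complex.mul_conj ((P : ℂ) + (Q : ℂ) * ω)
    rw [hc] at hmc
    have hval : ((Complex.normSq ((P : ℂ) + (Q : ℂ) * ω) : ℝ) : ℂ)
        = (((P ^ 2 - P * Q + Q ^ 2 : ℤ) : ℝ) : ℂ) := by
      rw [← hmc]
      push_cast
      linear_combination ((Q:ℂ))^2 * omega_pow3 + ((P:ℂ)*(Q:ℂ)) * omega_sum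
    exact Complex.ofReal_inj.mp hval
  · -- congruences
    have hdvd1 : (3 : ℤ) ∣ P + Q := by
      have : P + Q = ∑ i ∈ Finset.range n,
          ((Fc (A i) + Gc (A i) - 1) - (Fc (B i) + Gc (B i) - 1)) := by
        rw [hPdef, hQdef, ← Finset.sum_add_distrib]
        apply Finset.sum_congr rfl; intros; ring
      rw [this]
      exact Finset.dvd_sum fun i _ => dvd_sub (coord_dvd1 (hA3 i)) (coord_dvd1 (hB3 i))
    have hdvd2 : (3 : ℤ) ∣ P - Q - D := by
      have : P - Q - D = ∑ i ∈ Finset.range n,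
          ((Fc (A i) - Gc (A i) - (A i : ℤ) - 1) - (Fc (B i) - Gc (B i) - (B i : ℤ) - 1)) := by
        rw [hPdef, hQdef, hDdef, ← Finset.sum_sub_distrib, ← Finset.sum_sub_distrib]
        apply Finset.sum_congr rfl; intros; ring
      rw [this]
      exact Finset.dvd_sum fun i _ => dvd_sub (coord_dvd2 (hA3 i)) (coord_dvd2 (hB3 i))
    have hprodD : ((∏ i ∈ Finset.range n, Y i) = (∏ i ∈ Finset.range n, Z i)) ↔ (3 : ℤ) ∣ D := by
      have hYp : (∏ i ∈ Finset.range n, Y i) = ω ^ (∑ i ∈ Finset.range n, A i) := by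
        rw [← Finset.prod_pow_eq_pow_sum]
        exact Finset.prod_congr rfl fun i hi => hAY i (Finset.mem_range.mp hi)
      have hZp : (∏ i ∈ Finset.range n, Z i) = ω ^ (∑ i ∈ Finset.range n, B i) := by
        rw [← Finset.prod_pow_eq_pow_sum]
        exact Finset.prod_congr rfl fun i hi => hBZ i (Finset.mem_range.mp hi)
      rw [hYp, hZp]
      have hne : ω ≠ 0 := omega_prim.ne_zero (by norm_num)
      have hzpow : ∀ m l : ℕ, (ω ^ m = ω ^ l) ↔ ω ^ ((m : ℤ) - (l : ℤ)) = 1 := by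
        intro m l
        rw [zpow_sub₀ hne, zpow_natCast, zpow_natCast, div_eq_one_iff_eq (pow_ne_zero _ hne)]
      rw [hzpow, omega_prim.zpow_eq_one_iff_dvd]
      have hDeq : D = (↑(∑ i ∈ Finset.range n, A i) : ℤ) - (↑(∑ i ∈ Finset.range n, B i) : ℤ) := by
        rw [hDdef]; push_cast [Finset.sum_sub_distrib]; ring
      rw [hDeq]
      norm_cast
    obtain ⟨c1, c2⟩ := final_arith P Q D hdvd1 hdvd2
    exact ⟨fun h => c1 (hprodD.mp h), fun h => c2 (fun hd => h (hprodD.mpr hd))⟩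
end

section
/- Suppose that A, B, C form a 3-phase length s Golay sequence triad with s ≥ 2 and A(0) = B(0) = C(0) = 1 (normalised form). Then the values A(s−1), B(s−1), C(s−1) are exactly the three cube roots of unity 1, ω, ω²; that is, {A(s−1), B(s−1), C(s−1)} = {1, ω, ω²}. -/
open scoped BigOperators

/-- A length-`s` sequence: a function `ℤ → ℂ` vanishing outside `{0, …, s-1}`. -/
def IsLenSeq (s : ℕ) (A : ℤ → ℂ) : Prop :=
  ∀ i : ℤ, i < 0 ∨ (s : ℤ) ≤ i → A i = 0

/-- A 3-phase length-`s` sequence: a length-`s` sequence whose entries on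
`{0, …, s-1}` lie in `{1, ω, ω²}`. -/
def IsThreePhaseSeq (s : ℕ) (A : ℤ → ℂ) : Prop :=
  IsLenSeq s A ∧ ∀ i : ℤ, 0 ≤ i → i < (s : ℤ) → A i ∈ ({1, ω, ω ^ 2} : Set ℂ)

/-- Aperiodic autocorrelation function `C_A(u) = Σ_{i ∈ ℤ} A(i) conj(A(i+u))`. -/
noncomputable def aperCorr (A : ℤ → ℂ) (u : ℤ) : ℂ :=
  ∑' i : ℤ, A i * (starRingEnd ℂ) (A (i + u))

/-- Three 3-phase length-`s` sequences forming a 3-phase Golay sequence triad. -/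
def GolaySeqTriad (s : ℕ) (A B C : ℤ → ℂ) : Prop :=
  IsThreePhaseSeq s A ∧ IsThreePhaseSeq s B ∧ IsThreePhaseSeq s C ∧
    ∀ u : ℤ, u ≠ 0 → aperCorr A u + aperCorr B u + aperCorr C u = 0

lemma abs_omega : ‖ω‖ = 1 := by
  simp [ω, Complex.norm_exp]

lemma abs_mem {x : ℂ} (hx : x ∈ ({1, ω, ω ^ 2} : Set ℂ)) : ‖x‖ = 1 := by
  rcases hx with h | h | h <;> subst h <;> simp [abs_omega]

lemma corr_last {s : ℕ} (_hs : 2 ≤ s) {A : ℤ → ℂ} (hA : IsLenSeq s A) (hA0 : A 0 = 1) :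
    aperCorr A ((s : ℤ) - 1) = (starRingEnd ℂ) (A ((s : ℤ) - 1)) := by
  have h1 : aperCorr A ((s : ℤ) - 1)
      = A 0 * (starRingEnd ℂ) (A (0 + ((s : ℤ) - 1))) := by
    refine tsum_eq_single 0 (fun i hi => ?_)
    rcases lt_or_gt_of_ne hi with hlt | hgt
    · rw [hA i (Or.inl hlt), zero_mul]
    · rw [hA (i + ((s : ℤ) - 1)) (Or.inr (by omega)), map_zero, mul_zero]
  rw [h1, hA0, one_mul, zero_add]

/-- For a normalised 3-phase length-`s` Golay sequence triad (`s ≥ 2`,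
`A(0) = B(0) = C(0) = 1`), the values `A(s−1), B(s−1), C(s−1)` are exactly the
three cube roots of unity. -/
theorem normalised_golay_triad_last_entries (s : ℕ) (hs : 2 ≤ s) (A B C : ℤ → ℂ)
    (h : GolaySeqTriad s A B C) (hA0 : A 0 = 1) (hB0 : B 0 = 1) (hC0 : C 0 = 1) :
    ({A ((s : ℤ) - 1), B ((s : ℤ) - 1), C ((s : ℤ) - 1)} : Set ℂ) =
      ({1, ω, ω ^ 2} : Set ℂ) := by
  obtain ⟨⟨hAl, hAv⟩, ⟨hBl, hBv⟩, ⟨hCl, hCv⟩, hcor⟩ := h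
  set a := A ((s : ℤ) - 1) with ha
  set b := B ((s : ℤ) - 1) with hb
  set c := C ((s : ℤ) - 1) with hc
  have hma : a ∈ ({1, ω, ω ^ 2} : Set ℂ) := hAv _ (by omega) (by omega)
  have hmb : b ∈ ({1, ω, ω ^ 2} : Set ℂ) := hBv _ (by omega) (by omega)
  have hmc : c ∈ ({1, ω, ω ^ 2} : Set ℂ) := hCv _ (by omega) (by omega)
  have hsum0 : (starRingEnd ℂ) a + (starRingEnd ℂ) b + (starRingEnd ℂ) c = 0 := by
    have := hcor ((s : ℤ) - 1) (by omega)
    rwa [corr_last hs hAl hA0, corr_last hs hBl hB0, corr_last hs hCl hC0] at this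
  have hsum : a + b + c = 0 := by
    have := congrArg (starRingEnd ℂ) hsum0
    simpa using this
  have key : ∀ x y z : ℂ, x ∈ ({1, ω, ω ^ 2} : Set ℂ) → y ∈ ({1, ω, ω ^ 2} : Set ℂ) →
      z ∈ ({1, ω, ω ^ 2} : Set ℂ) → x + y + z = 0 → x ≠ y := by
    intro x y z hx hy hz hxyz hxy
    have hzval : z = -(2 * x) := by rw [hxy] at hxyz; linear_combination hxyz + 2 * hxy
    have h1 : ‖z‖ = 2 * ‖x‖ := by
      rw [hzval]; simp [map_mul]
    rw [abs_mem hz, abs_mem hx] at h1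
    norm_num at h1
  have hab : a ≠ b := key a b c hma hmb hmc hsum
  have hbc : b ≠ c := key b c a hmb hmc hma (by linear_combination hsum)
  have hac : a ≠ c := key a c b hma hmc hmb (by linear_combination hsum)
  clear_value a b c
  rcases hma with rfl | rfl | rfl <;> rcases hmb with rfl | rfl | rfl <;>
    rcases hmc with rfl | rfl | rfl <;>
    first
      | exact absurd rfl hab
      | exact absurd rfl hbc
      | exact absurd rfl hac
      | (ext t; constructor <;> (intro ht; simp only [Set.mem_insert_iff, Set.mem_singleton_iff] at ht ⊢; tauto))
end
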